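/- Let n be an integer with n ≥ 2. If z ∈ ℂ \ ℝ is a non-real complex root of the polynomial r^n − n·r + n − 1, then |z| > 1. -/

import Mathlib

/-- For `n ≥ 2`, every non-real complex root of `r^n − n·r + n − 1` has modulus
greater than `1`. -/
theorem nonreal_root_abs_gt_one
    (n : ℕ) (hn : 2 ≤ n) (z : ℂ) (hz : z.im ≠ 0)
    (hroot : z ^ n - (n : ℂ) * z + (n : ℂ) - 1 = 0) :
    1 < ‖z‖ := by
  by_contra hle
  push_neg at hle
  have hz1 : z ≠ 1 := fun h => hz (by simp [h])
  have hgeom : (∑ k ∈ Finset.range n, z ^ k) * (z - 1) = z ^ n - 1 := geom_sum_mul z n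
  have hsum : ∑ k ∈ Finset.range n, z ^ k = n := by
    have h1 : (∑ k ∈ Finset.range n, z ^ k - n) * (z - 1) = 0 := by
      rw [sub_mul, hgeom]
      linear_combination hroot
    rcases mul_eq_zero.mp h1 with h | h
    · exact sub_eq_zero.mp h
    · exact absurd (sub_eq_zero.mp h) hz1
  have hle' : ∀ k ∈ Finset.range n, (z ^ k).re ≤ 1 := by
    intro k _
    calc (z ^ k).re ≤ ‖z ^ k‖ := Complex.re_le_norm _
      _ = ‖z‖ ^ k := norm_pow _ _
      _ ≤ 1 := pow_le_one₀ (norm_nonneg z) hle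
  have hsumre : ∑ k ∈ Finset.range n, (z ^ k).re = n := by
    have := congrArg Complex.re hsum
    simpa [Complex.re_sum] using this
  have hre1 : z.re = 1 := by
    by_contra hne
    have hlt : ∑ k ∈ Finset.range n, (z ^ k).re < ∑ _k ∈ Finset.range n, (1 : ℝ) := by
      refine Finset.sum_lt_sum hle' ⟨1, Finset.mem_range.mpr (by omega), ?_⟩
      simpa using lt_of_le_of_ne (by simpa using hle' 1 (Finset.mem_range.mpr (by omega)))
        (by simpa using hne)
    simp [hsumre] at hlt
  have habs : ‖z‖ ^ 2 = z.re ^ 2 + z.im ^ 2 := by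
    rw [Complex.sq_norm, Complex.normSq_apply]; ring
  have him : 0 < z.im ^ 2 := by positivity
  nlinarith [norm_nonneg z]
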